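/- arXiv:1304.1755 — 7 statements merged into one kernel-verified Lean document; each statement's English description precedes it below -/
import Mathlib

section
/- Let n₁, n₂ be positive integers. Let Â be a symmetric positive definite real n₁×n₁ matrix, D a symmetric positive definite real n₂×n₂ matrix, and W a real n₂×n₁ matrix. Define the Schur complement S = D - W Â⁻¹ Wᵀ and assume S is symmetric positive definite. Then every eigenvalue μ of the generalized eigenvalue problem S z = μ D z (i.e., every μ ∈ ℝ for which there exists z ≠ 0 with S z = μ D z) satisfies 0 < μ ≤ 1. -/
open Matrix

/-- Every eigenvalue `μ` of the generalized eigenvalue problem `S z = μ D z`,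
where `S = D - W Ahat⁻¹ Wᵀ` is the Schur complement and `Ahat`, `D`, `S` are
symmetric positive definite, satisfies `0 < μ ≤ 1`. -/
theorem schur_generalized_eigenvalue_bounds
    (n₁ n₂ : ℕ) (hn₁ : 0 < n₁) (hn₂ : 0 < n₂)
    (Ahat : Matrix (Fin n₁) (Fin n₁) ℝ) (hA : Ahat.PosDef)
    (D : Matrix (Fin n₂) (Fin n₂) ℝ) (hD : D.PosDef)
    (W : Matrix (Fin n₂) (Fin n₁) ℝ)
    (S : Matrix (Fin n₂) (Fin n₂) ℝ) (hS : S = D - W * Ahat⁻¹ * Wᵀ)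
    (hSpd : S.PosDef)
    (μ : ℝ) (z : Fin n₂ → ℝ) (hz : z ≠ 0)
    (heig : S *ᵥ z = μ • (D *ᵥ z)) :
    0 < μ ∧ μ ≤ 1 := by
  have hSz : (0:ℝ) < z ⬝ᵥ (S *ᵥ z) := by simpa using hSpd.dotProduct_mulVec_pos hz
  have hDz : (0:ℝ) < z ⬝ᵥ (D *ᵥ z) := by simpa using hD.dotProduct_mulVec_pos hz
  have hM : (W * Ahat⁻¹ * Wᵀ).PosSemidef := by
    have := hA.inv.posSemidef.mul_mul_conjTranspose_same W
    simpa using this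
  have hnn : (0:ℝ) ≤ z ⬝ᵥ ((W * Ahat⁻¹ * Wᵀ) *ᵥ z) := by simpa using hM.dotProduct_mulVec_nonneg z
  have key : z ⬝ᵥ (S *ᵥ z) = μ * (z ⬝ᵥ (D *ᵥ z)) := by
    rw [heig, dotProduct_smul, smul_eq_mul]
  have hle : z ⬝ᵥ (S *ᵥ z) ≤ z ⬝ᵥ (D *ᵥ z) := by
    have : z ⬝ᵥ (D *ᵥ z) - z ⬝ᵥ (S *ᵥ z) = z ⬝ᵥ ((W * Ahat⁻¹ * Wᵀ) *ᵥ z) := by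
      rw [hS]; simp [sub_mulVec, dotProduct_sub]
    linarith
  constructor
  · nlinarith [hSz, hDz, key]
  · nlinarith [hle, key, hDz]
end

section
/- Let n₁, n₂ be positive integers, Â a symmetric positive definite real n₁×n₁ matrix, D a symmetric positive definite real n₂×n₂ matrix, and W a real n₂×n₁ matrix. Form the block matrices A = [[Â, Wᵀ],[W, D]] and B_T = [[Â, 0],[W, D]], and assume A is positive definite. Then every complex eigenvalue μ of B_T⁻¹ A is a real number satisfying 0 < μ ≤ 1. -/
open Matrix Complex
open scoped ComplexOrder

lemma herm_quad_star {n : Type*} [Fintype n] {M : Matrix n n ℂ} (hM : M.IsHermitian) (x : n → ℂ) :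
    star (star x ⬝ᵥ (M *ᵥ x)) = star x ⬝ᵥ (M *ᵥ x) := by
  rw [← star_dotProduct, star_mulVec, ← dotProduct_mulVec, hM.eq]

lemma posDef_map_ofReal {n : Type*} [Fintype n] {M : Matrix n n ℝ} (hM : M.PosDef) :
    (M.map Complex.ofReal).PosDef := by
  have hherm : (M.map Complex.ofReal).IsHermitian :=
    hM.1.map _ fun a => (Complex.conj_ofReal a).symm
  refine PosDef.of_dotProduct_mulVec_pos hherm fun ⦃x⦄ hx => ?_
  set a : n → ℝ := fun i => (x i).re with ha
  set b : n → ℝ := fun i => (x i).im with hb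
  have hre : (star x ⬝ᵥ ((M.map Complex.ofReal) *ᵥ x)).re = a ⬝ᵥ (M *ᵥ a) + b ⬝ᵥ (M *ᵥ b) := by
    simp only [dotProduct, mulVec, map_apply, Pi.star_apply, RCLike.star_def, Complex.re_sum,
      Complex.mul_re, Complex.conj_re, Complex.conj_im, Complex.im_sum, Complex.ofReal_re,
      Complex.ofReal_im, Complex.mul_im, Finset.mul_sum, Finset.sum_mul, ha, hb]
    rw [← Finset.sum_add_distrib]
    refine Finset.sum_congr rfl fun i _ => ?_
    rw [← Finset.sum_add_distrib]
    exact Finset.sum_congr rfl fun j _ => by ring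
  have him : (star x ⬝ᵥ ((M.map Complex.ofReal) *ᵥ x)).im = 0 :=
    Complex.conj_eq_iff_im.mp (herm_quad_star hherm x)
  rw [Complex.lt_def, Complex.zero_re, Complex.zero_im, him, hre]
  refine ⟨?_, rfl⟩
  have hab : a ≠ 0 ∨ b ≠ 0 := by
    by_contra h
    push_neg at h
    exact hx (funext fun i => Complex.ext (congrFun h.1 i) (congrFun h.2 i))
  rcases hab with h | h
  · have h1 : 0 < a ⬝ᵥ (M *ᵥ a) := by simpa [star_trivial] using hM.dotProduct_mulVec_pos h
    have h2 : 0 ≤ b ⬝ᵥ (M *ᵥ b) := by simpa [star_trivial] using hM.posSemidef.dotProduct_mulVec_nonneg b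
    linarith
  · have h1 : 0 ≤ a ⬝ᵥ (M *ᵥ a) := by simpa [star_trivial] using hM.posSemidef.dotProduct_mulVec_nonneg a
    have h2 : 0 < b ⬝ᵥ (M *ᵥ b) := by simpa [star_trivial] using hM.dotProduct_mulVec_pos h
    linarith

/-- Every complex eigenvalue of `B_T⁻¹ A`, where `A = [[Â, Wᵀ],[W, D]]` is positive
definite with `Â`, `D` symmetric positive definite and `B_T = [[Â, 0],[W, D]]`,
is a real number `μ` with `0 < μ ≤ 1`. -/
theorem blockTriangular_preconditioned_spectrum_in_unit_interval
    (n₁ n₂ : ℕ) (hn₁ : 0 < n₁) (hn₂ : 0 < n₂)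
    (Ahat : Matrix (Fin n₁) (Fin n₁) ℝ) (hA : Ahat.PosDef)
    (D : Matrix (Fin n₂) (Fin n₂) ℝ) (hD : D.PosDef)
    (W : Matrix (Fin n₂) (Fin n₁) ℝ)
    (A : Matrix (Fin n₁ ⊕ Fin n₂) (Fin n₁ ⊕ Fin n₂) ℝ)
    (hAdef : A = Matrix.fromBlocks Ahat Wᵀ W D)
    (hApd : A.PosDef)
    (BT : Matrix (Fin n₁ ⊕ Fin n₂) (Fin n₁ ⊕ Fin n₂) ℝ)
    (hBT : BT = Matrix.fromBlocks Ahat 0 W D)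
    (μ : ℂ) (hμ : μ ∈ spectrum ℂ ((BT⁻¹ * A).map Complex.ofReal)) :
    μ.im = 0 ∧ 0 < μ.re ∧ μ.re ≤ 1 := by
  -- matrices over ℂ
  set A1 : Matrix (Fin n₁) (Fin n₁) ℂ := Ahat.map Complex.ofReal with hA1
  set D1 : Matrix (Fin n₂) (Fin n₂) ℂ := D.map Complex.ofReal with hD1
  set W1 : Matrix (Fin n₂) (Fin n₁) ℂ := W.map Complex.ofReal with hW1
  set Wt1 : Matrix (Fin n₁) (Fin n₂) ℂ := (Wᵀ).map Complex.ofReal with hWt1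
  have hWt : Wt1 = W1ᴴ := by
    ext i j
    simp [hWt1, hW1, conjTranspose_apply, Complex.conj_ofReal]
  have hco : ⇑Complex.ofRealHom = Complex.ofReal := rfl
  -- invertibility of BT
  have hdetBT : IsUnit BT.det := by
    rw [hBT, Matrix.det_fromBlocks_zero₁₂]
    exact (mul_pos hA.det_pos hD.det_pos).ne'.isUnit
  have hBTinv : BT * BT⁻¹ = 1 := mul_nonsing_inv _ hdetBT
  -- eigenvector
  rw [spectrum.mem_iff] at hμ
  have hdet0 : (algebraMap ℂ (Matrix (Fin n₁ ⊕ Fin n₂) (Fin n₁ ⊕ Fin n₂) ℂ) μ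
      - (BT⁻¹ * A).map Complex.ofReal).det = 0 := by
    by_contra h
    exact hμ ((Matrix.isUnit_iff_isUnit_det _).mpr (isUnit_iff_ne_zero.mpr h))
  obtain ⟨x, hx0, hxe⟩ := (Matrix.exists_mulVec_eq_zero_iff).mpr hdet0
  have hTx : ((BT⁻¹ * A).map Complex.ofReal) *ᵥ x = μ • x := by
    rw [Matrix.sub_mulVec] at hxe
    have h2 : algebraMap ℂ (Matrix (Fin n₁ ⊕ Fin n₂) (Fin n₁ ⊕ Fin n₂) ℂ) μ *ᵥ x = μ • x := by
      rw [Algebra.algebraMap_eq_smul_one, Matrix.smul_mulVec, Matrix.one_mulVec]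
    rw [h2] at hxe
    exact (sub_eq_zero.mp hxe).symm
  have hmap : (BT.map Complex.ofReal) * ((BT⁻¹ * A).map Complex.ofReal)
      = A.map Complex.ofReal := by
    rw [← hco, ← Matrix.map_mul, ← Matrix.mul_assoc, hBTinv, Matrix.one_mul]
  have hAx : (A.map Complex.ofReal) *ᵥ x = μ • ((BT.map Complex.ofReal) *ᵥ x) := by
    rw [← hmap, ← mulVec_mulVec, hTx, mulVec_smul]
  -- block decomposition
  set u : Fin n₁ → ℂ := x ∘ Sum.inl with hu
  set v : Fin n₂ → ℂ := x ∘ Sum.inr with hv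
  have hxuv : x = Sum.elim u v := (Sum.elim_comp_inl_inr x).symm
  have hAmap : A.map Complex.ofReal = fromBlocks A1 Wt1 W1 D1 := by
    rw [hAdef, fromBlocks_map]
  have hBTmap : BT.map Complex.ofReal = fromBlocks A1 0 W1 D1 := by
    rw [hBT, fromBlocks_map]
    have h0 : (0 : Matrix (Fin n₁) (Fin n₂) ℝ).map Complex.ofReal = 0 := by
      ext i j; simp
    rw [h0]
  rw [hAmap, hBTmap, hxuv, fromBlocks_mulVec, fromBlocks_mulVec] at hAx
  have eq1 : A1 *ᵥ u + Wt1 *ᵥ v = μ • (A1 *ᵥ u) := by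
    funext i
    have := congrFun hAx (Sum.inl i)
    simpa using this
  have eq2 : W1 *ᵥ u + D1 *ᵥ v = μ • (W1 *ᵥ u + D1 *ᵥ v) := by
    funext i
    have := congrFun hAx (Sum.inr i)
    simpa using this
  by_cases hμ1 : μ = 1
  · exact ⟨by simp [hμ1], by simp [hμ1], by simp [hμ1]⟩
  -- the case μ ≠ 1
  have hWD : W1 *ᵥ u + D1 *ᵥ v = 0 := by
    have h' : (1 - μ) • (W1 *ᵥ u + D1 *ᵥ v) = 0 := by
      rw [sub_smul, one_smul, ← eq2, sub_self]
    exact (smul_eq_zero.mp h').resolve_left (sub_ne_zero.mpr (Ne.symm hμ1))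
  have hDv : D1 *ᵥ v = -(W1 *ᵥ u) := by
    rw [eq_neg_iff_add_eq_zero, add_comm]; exact hWD
  have hdetD1 : IsUnit D1.det := by
    have hdet : (D.map Complex.ofReal).det = Complex.ofReal (D.det) := by
      rw [← hco, ← RingHom.mapMatrix_apply, ← RingHom.map_det]
    rw [hD1, hdet]
    simpa using hD.det_pos.ne'
  have hD1inv : D1⁻¹ * D1 = 1 := nonsing_inv_mul _ hdetD1
  have hu0 : u ≠ 0 := by
    intro h
    have hDv0 : D1 *ᵥ v = 0 := by rw [hDv, h, mulVec_zero, neg_zero]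
    have hv0 : v = 0 := by
      calc v = (D1⁻¹ * D1) *ᵥ v := by rw [hD1inv, one_mulVec]
        _ = D1⁻¹ *ᵥ (D1 *ᵥ v) := (mulVec_mulVec _ _ _).symm
        _ = 0 := by rw [hDv0, mulVec_zero]
    apply hx0
    rw [hxuv, h, hv0]
    ext (i | i) <;> rfl
  have eq1' : Wt1 *ᵥ v = (μ - 1) • (A1 *ᵥ u) := by
    rw [sub_smul, one_smul, ← eq1]
    abel
  -- quadratic forms
  set t : ℂ := star u ⬝ᵥ (A1 *ᵥ u) with htdef
  set q : ℂ := star v ⬝ᵥ (D1 *ᵥ v) with hqdef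
  have hA1pd : A1.PosDef := posDef_map_ofReal hA
  have hD1pd : D1.PosDef := posDef_map_ofReal hD
  have ht : 0 < t := hA1pd.dotProduct_mulVec_pos hu0
  have hq : 0 ≤ q := hD1pd.posSemidef.dotProduct_mulVec_nonneg v
  have key1 : star u ⬝ᵥ (Wt1 *ᵥ v) = (μ - 1) * t := by
    rw [eq1', dotProduct_smul, smul_eq_mul]
  have key2 : star u ⬝ᵥ (Wt1 *ᵥ v) = -q := by
    have hqstar : star q = q := herm_quad_star hD1pd.1 v
    have h1 : W1 *ᵥ u = -(D1 *ᵥ v) := by rw [hDv, neg_neg]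
    rw [hWt, dotProduct_mulVec, ← star_mulVec, h1, star_neg, neg_dotProduct,
      star_dotProduct]
    exact congrArg Neg.neg hqstar
  -- Schur complement positivity
  haveI : Invertible D1 := D1.invertibleOfIsUnitDet hdetD1
  have hWt1H : Wt1ᴴ = W1 := by rw [hWt, conjTranspose_conjTranspose]
  set y : Fin n₂ → ℂ := -((D1⁻¹ * W1) *ᵥ u) with hy
  have hschur := schur_complement_eq₂₂ A1 Wt1 u y hD1pd.1
  rw [hWt1H] at hschur
  have hz0 : Sum.elim u y ≠ 0 := by
    intro h
    apply hu0
    funext i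
    exact congrFun h (Sum.inl i)
  have hApd1 : (fromBlocks A1 Wt1 W1 D1).PosDef := by
    rw [← hAmap]; exact posDef_map_ofReal hApd
  have hlhs : (0 : ℂ) < star (Sum.elim u y) ᵥ* fromBlocks A1 Wt1 W1 D1 ⬝ᵥ Sum.elim u y := by
    rw [← dotProduct_mulVec]
    exact hApd1.dotProduct_mulVec_pos hz0
  have hfirst : (D1⁻¹ * W1) *ᵥ u + y = 0 := by rw [hy, add_neg_cancel]
  rw [hschur, hfirst] at hlhs
  simp only [star_zero, zero_vecMul, zero_dotProduct, zero_add] at hlhs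
  have hr : (0 : ℂ) < star u ⬝ᵥ ((A1 - Wt1 * D1⁻¹ * W1) *ᵥ u) := by
    rw [dotProduct_mulVec]; exact hlhs
  -- r = t - q
  have hDinvW : (D1⁻¹ *ᵥ (W1 *ᵥ u)) = -v := by
    rw [← neg_neg (W1 *ᵥ u), ← hDv, mulVec_neg, mulVec_mulVec, hD1inv, one_mulVec]
  have hrtq : star u ⬝ᵥ ((A1 - Wt1 * D1⁻¹ * W1) *ᵥ u) = t - q := by
    rw [sub_mulVec, dotProduct_sub, ← htdef]
    congr 1
    rw [← mulVec_mulVec, ← mulVec_mulVec, hDinvW, mulVec_neg, dotProduct_neg, key2, neg_neg]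
  rw [hrtq] at hr
  -- scalar identities
  have hμt : μ * t = t - q := by
    have : (μ - 1) * t = -q := key1.symm.trans key2
    linear_combination this
  -- realness
  have htre : t = ((t.re : ℝ) : ℂ) := by
    have := Complex.lt_def.mp ht
    exact Complex.ext rfl (by simpa using this.2.symm)
  have hqre : q = ((q.re : ℝ) : ℂ) := by
    have := Complex.le_def.mp hq
    exact Complex.ext rfl (by simpa using this.2.symm)
  have htpos : 0 < t.re := (Complex.lt_def.mp ht).1
  have hqpos : 0 ≤ q.re := (Complex.le_def.mp hq).1
  have hrpos : 0 < t.re - q.re := by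
    have := (Complex.lt_def.mp hr).1
    simpa using this
  have hμval : μ = (((t.re - q.re) / t.re : ℝ) : ℂ) := by
    have htne : ((t.re : ℝ) : ℂ) ≠ 0 := Complex.ofReal_ne_zero.mpr htpos.ne'
    rw [Complex.ofReal_div, Complex.ofReal_sub, eq_div_iff htne, ← htre, ← hqre]
    exact hμt
  rw [hμval]
  refine ⟨by simp, ?_, ?_⟩
  · rw [Complex.ofReal_re]
    exact div_pos hrpos htpos
  · rw [Complex.ofReal_re, div_le_one htpos]
    linarith
end

section
/- Let n₁, n₂ be positive integers, Â an invertible real n₁×n₁ matrix, D an invertible real n₂×n₂ matrix, and W a real n₂×n₁ matrix. Form A = [[Â, Wᵀ],[W, D]], B_T = [[Â, 0],[W, D]], and the Schur complement S = D - W Â⁻¹ Wᵀ. Then the spectrum of B_T⁻¹ A (over ℂ) is contained in {1} ∪ σ(D⁻¹ S), where σ(D⁻¹ S) denotes the spectrum of D⁻¹ S. -/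
open Matrix

/-- The spectrum of `B_T⁻¹ A` (over `ℂ`) is contained in `{1} ∪ σ(D⁻¹ S)`,
where `A = [[Â, Wᵀ],[W, D]]`, `B_T = [[Â, 0],[W, D]]` and `S = D - W Â⁻¹ Wᵀ`
is the Schur complement of `Â` in `A`. -/
theorem blockTriangular_preconditioned_spectrum_subset
    (n₁ n₂ : ℕ) (hn₁ : 0 < n₁) (hn₂ : 0 < n₂)
    (Ahat : Matrix (Fin n₁) (Fin n₁) ℝ) (hA : IsUnit Ahat.det)
    (D : Matrix (Fin n₂) (Fin n₂) ℝ) (hD : IsUnit D.det)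
    (W : Matrix (Fin n₂) (Fin n₁) ℝ)
    (A : Matrix (Fin n₁ ⊕ Fin n₂) (Fin n₁ ⊕ Fin n₂) ℝ)
    (hAdef : A = Matrix.fromBlocks Ahat Wᵀ W D)
    (BT : Matrix (Fin n₁ ⊕ Fin n₂) (Fin n₁ ⊕ Fin n₂) ℝ)
    (hBT : BT = Matrix.fromBlocks Ahat 0 W D)
    (S : Matrix (Fin n₂) (Fin n₂) ℝ) (hS : S = D - W * Ahat⁻¹ * Wᵀ) :
    spectrum ℂ ((BT⁻¹ * A).map Complex.ofReal) ⊆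
      {1} ∪ spectrum ℂ ((D⁻¹ * S).map Complex.ofReal) := by
  have hBTdet : IsUnit BT.det := by
    rw [hBT, det_fromBlocks_zero₁₂]; exact hA.mul hD
  -- BT * M = A with M the block upper triangular matrix
  have key : BT * fromBlocks 1 (Ahat⁻¹ * Wᵀ) 0 (D⁻¹ * S) = A := by
    rw [hBT, hAdef, fromBlocks_multiply]
    have h1 : Ahat * (Ahat⁻¹ * Wᵀ) = Wᵀ := by
      rw [← Matrix.mul_assoc, Matrix.mul_nonsing_inv _ hA, Matrix.one_mul]
    have h2 : W * (Ahat⁻¹ * Wᵀ) + D * (D⁻¹ * S) = D := by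
      rw [← Matrix.mul_assoc D, Matrix.mul_nonsing_inv _ hD, Matrix.one_mul, hS,
        ← Matrix.mul_assoc]
      abel
    simp [h1, h2]
  have hM : BT⁻¹ * A = fromBlocks 1 (Ahat⁻¹ * Wᵀ) 0 (D⁻¹ * S) := by
    rw [← key, ← Matrix.mul_assoc, Matrix.nonsing_inv_mul _ hBTdet, Matrix.one_mul]
  rw [hM]
  intro μ hμ
  by_cases h1 : μ = 1
  · exact Or.inl h1
  right
  by_contra h2
  rw [spectrum.mem_iff, not_not] at h2
  rw [spectrum.mem_iff] at hμ
  apply hμ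
  rw [Matrix.isUnit_iff_isUnit_det] at h2 ⊢
  rw [Algebra.algebraMap_eq_smul_one] at h2 ⊢
  have hmap : (fromBlocks 1 (Ahat⁻¹ * Wᵀ) 0 (D⁻¹ * S)).map (Complex.ofReal) =
      fromBlocks (1 : Matrix (Fin n₁) (Fin n₁) ℂ) ((Ahat⁻¹ * Wᵀ).map Complex.ofReal) 0 ((D⁻¹ * S).map Complex.ofReal) := by
    rw [fromBlocks_map,
      Matrix.map_one Complex.ofReal Complex.ofReal_zero Complex.ofReal_one,
      Matrix.map_zero Complex.ofReal Complex.ofReal_zero]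
  rw [hmap]
  have hone : (μ • 1 : Matrix (Fin n₁ ⊕ Fin n₂) (Fin n₁ ⊕ Fin n₂) ℂ) =
      fromBlocks (μ • 1) 0 0 (μ • 1) := by
    rw [← fromBlocks_one, fromBlocks_smul]; simp
  rw [hone, sub_eq_add_neg, fromBlocks_neg, fromBlocks_add]
  simp only [add_zero, neg_zero, zero_add, ← sub_eq_add_neg]
  rw [det_fromBlocks_zero₂₁, isUnit_iff_ne_zero]
  have e1 : Matrix.det (μ • 1 - 1 : Matrix (Fin n₁) (Fin n₁) ℂ) = (μ - 1) ^ n₁ := by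
    have : (μ • 1 - 1 : Matrix (Fin n₁) (Fin n₁) ℂ) = (μ - 1) • 1 := by
      rw [sub_smul, one_smul]
    rw [this, det_smul, det_one, mul_one, Fintype.card_fin]
  rw [e1]
  apply mul_ne_zero
  · exact pow_ne_zero _ (sub_ne_zero.mpr h1)
  · rw [isUnit_iff_ne_zero] at h2; exact h2
end

section
/- Let n₁, n₂ be positive integers, Â a symmetric positive definite real n₁×n₁ matrix, D a symmetric positive definite real n₂×n₂ matrix, and W a real n₂×n₁ matrix. Form A = [[Â, Wᵀ],[W, D]] and B_T = [[Â, 0],[W, D]], and assume A is positive definite. Then every complex eigenvalue of B_T⁻¹ A is a strictly positive real number. -/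
open Matrix

/-- Complexified quadratic form of a real positive-definite matrix. -/
lemma posdef_complexify {n : Type*} [Fintype n] [DecidableEq n] {M : Matrix n n ℝ}
    (hM : M.PosDef) (x : n → ℂ) (hx : x ≠ 0) :
    (star x ⬝ᵥ ((M.map Complex.ofReal) *ᵥ x)).im = 0 ∧
      0 < (star x ⬝ᵥ ((M.map Complex.ofReal) *ᵥ x)).re := by
  classical
  set a : n → ℝ := fun i => (x i).re with ha
  set b : n → ℝ := fun i => (x i).im with hb
  set aC : n → ℂ := fun i => ((a i : ℝ) : ℂ) with haC
  set bC : n → ℂ := fun i => ((b i : ℝ) : ℂ) with hbC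
  have hx' : x = aC + Complex.I • bC := by
    funext i
    simp [haC, hbC, ha, hb, Complex.ext_iff]
  have hmapC : M.map Complex.ofReal = M.map (Complex.ofRealHom : ℝ →+* ℂ) := rfl
  have key : ∀ u v : n → ℝ,
      (fun i => ((u i : ℝ) : ℂ)) ⬝ᵥ ((M.map Complex.ofReal) *ᵥ (fun i => ((v i : ℝ) : ℂ)))
        = ((u ⬝ᵥ (M *ᵥ v) : ℝ) : ℂ) := by
    intro u v
    have h2 : ((Complex.ofRealHom : ℝ →+* ℂ) (u ⬝ᵥ (M *ᵥ v)))
        = ((Complex.ofRealHom : ℝ →+* ℂ) ∘ u) ⬝ᵥ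
          ((M.map (Complex.ofRealHom : ℝ →+* ℂ)) *ᵥ ((Complex.ofRealHom : ℝ →+* ℂ) ∘ v)) := by
      rw [RingHom.map_dotProduct]
      congr 1
      funext i
      exact RingHom.map_mulVec _ _ _ i
    exact h2.symm
  have hsym : ∀ u v : n → ℝ, u ⬝ᵥ (M *ᵥ v) = v ⬝ᵥ (M *ᵥ u) := by
    intro u v
    have hMT : Mᵀ = M := by
      ext i j
      have h := congrFun (congrFun hM.1 i) j
      simpa [conjTranspose_apply] using h
    rw [dotProduct_mulVec, dotProduct_comm, ← mulVec_transpose, hMT]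
  have hstar : star aC = aC ∧ star bC = bC := by
    constructor <;> funext i <;> simp [haC, hbC, Complex.conj_ofReal]
  have hz : star x ⬝ᵥ ((M.map Complex.ofReal) *ᵥ x)
      = ((a ⬝ᵥ (M *ᵥ a) + b ⬝ᵥ (M *ᵥ b) : ℝ) : ℂ) := by
    rw [hx']
    rw [star_add, star_smul, hstar.1, hstar.2]
    rw [mulVec_add, mulVec_smul]
    rw [dotProduct_add, add_dotProduct, add_dotProduct, dotProduct_smul,
      smul_dotProduct, smul_dotProduct, dotProduct_smul]
    rw [key a a, key a b, key b a, key b b, hsym b a]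
    have : star Complex.I = -Complex.I := by simp
    rw [this]
    simp only [smul_eq_mul]
    push_cast
    linear_combination (-((b ⬝ᵥ (M *ᵥ b) : ℝ) : ℂ)) * Complex.I_mul_I
  rw [hz]
  have hab : a ≠ 0 ∨ b ≠ 0 := by
    by_contra h
    push_neg at h
    apply hx
    funext i
    have h1 : a i = 0 := congrFun h.1 i
    have h2 : b i = 0 := congrFun h.2 i
    simp only [Pi.zero_apply]
    rw [Complex.ext_iff]
    exact ⟨h1, h2⟩
  have hpos : 0 < a ⬝ᵥ (M *ᵥ a) + b ⬝ᵥ (M *ᵥ b) := by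
    rcases hab with h | h
    · have h1 := hM.dotProduct_mulVec_pos h
      have h2 := hM.posSemidef.dotProduct_mulVec_nonneg b
      simp only [star_trivial] at h1 h2
      linarith
    · have h1 := hM.posSemidef.dotProduct_mulVec_nonneg a
      have h2 := hM.dotProduct_mulVec_pos h
      simp only [star_trivial] at h1 h2
      linarith
  simp [hpos]

/-- Every complex eigenvalue of `B_T⁻¹ A` is a strictly positive real number,
where `A = [[Â, Wᵀ],[W, D]]` is positive definite with `Â`, `D` symmetric
positive definite, and `B_T = [[Â, 0],[W, D]]`. -/
theorem blockTriangular_preconditioned_eigenvalues_positive_real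
    (n₁ n₂ : ℕ) (hn₁ : 0 < n₁) (hn₂ : 0 < n₂)
    (Ahat : Matrix (Fin n₁) (Fin n₁) ℝ) (hA : Ahat.PosDef)
    (D : Matrix (Fin n₂) (Fin n₂) ℝ) (hD : D.PosDef)
    (W : Matrix (Fin n₂) (Fin n₁) ℝ)
    (A : Matrix (Fin n₁ ⊕ Fin n₂) (Fin n₁ ⊕ Fin n₂) ℝ)
    (hAdef : A = Matrix.fromBlocks Ahat Wᵀ W D)
    (hApd : A.PosDef)
    (BT : Matrix (Fin n₁ ⊕ Fin n₂) (Fin n₁ ⊕ Fin n₂) ℝ)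
    (hBT : BT = Matrix.fromBlocks Ahat 0 W D)
    (μ : ℂ) (hμ : μ ∈ spectrum ℂ ((BT⁻¹ * A).map Complex.ofReal)) :
    μ.im = 0 ∧ 0 < μ.re := by
  classical
  subst hAdef hBT
  have hAunit : IsUnit Ahat.det := hA.det_pos.ne'.isUnit
  have hDunit : IsUnit D.det := hD.det_pos.ne'.isUnit
  haveI : Invertible Ahat := hA.isUnit.invertible
  have hAinv : Ahat * Ahat⁻¹ = 1 := mul_nonsing_inv Ahat hAunit
  have hDinv : D * D⁻¹ = 1 := mul_nonsing_inv D hDunit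
  set S : Matrix (Fin n₂) (Fin n₂) ℝ := D - W * Ahat⁻¹ * Wᵀ with hSdef
  have hW : (Wᵀ)ᴴ = W := by ext i j; simp [conjTranspose_apply]
  -- S is positive definite (Schur complement)
  have hS : S.PosDef := by
    refine Matrix.PosDef.of_dotProduct_mulVec_pos ?_ ?_
    · have h1 : (W * Ahat⁻¹ * Wᵀ)ᴴ = W * Ahat⁻¹ * Wᵀ := by
        have h2 := isHermitian_conjTranspose_mul_mul Wᵀ hA.1.inv
        rwa [hW] at h2
      exact hD.1.sub h1
    · intro y hy
      have hvec : (-((Ahat⁻¹ * Wᵀ) *ᵥ y)) ⊕ᵥ y ≠ 0 := by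
        intro h0
        apply hy
        funext i
        exact congrFun h0 (Sum.inr i)
      have hq := hApd.dotProduct_mulVec_pos hvec
      rw [dotProduct_mulVec] at hq
      rw [show Matrix.fromBlocks Ahat Wᵀ W D = Matrix.fromBlocks Ahat Wᵀ (Wᵀ)ᴴ D by rw [hW]]
        at hq
      rw [Matrix.schur_complement_eq₁₁ Wᵀ D _ _ hA.1] at hq
      rw [neg_add_cancel] at hq
      simp only [star_zero, Matrix.zero_vecMul, zero_dotProduct, zero_add] at hq
      rw [hW] at hq
      rw [← Matrix.dotProduct_mulVec] at hq
      exact hq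
  set X : Matrix (Fin n₁) (Fin n₂) ℝ := Ahat⁻¹ * Wᵀ with hXdef
  set Y : Matrix (Fin n₂) (Fin n₂) ℝ := D⁻¹ * S with hYdef
  -- the preconditioned matrix is block upper triangular
  have hprod : Matrix.fromBlocks Ahat 0 W D * Matrix.fromBlocks 1 X 0 Y
      = Matrix.fromBlocks Ahat Wᵀ W D := by
    rw [Matrix.fromBlocks_multiply]
    have e1 : Ahat * X = Wᵀ := by
      rw [hXdef, ← Matrix.mul_assoc, hAinv, Matrix.one_mul]
    have e2 : W * X + D * Y = D := by
      rw [hXdef, hYdef, ← Matrix.mul_assoc D, hDinv, Matrix.one_mul, hSdef,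
        ← Matrix.mul_assoc]
      abel
    rw [e1]
    simp only [Matrix.mul_one, Matrix.mul_zero, Matrix.zero_mul, add_zero, zero_add, e2]
  have hBTdet : IsUnit (Matrix.fromBlocks Ahat 0 W D).det := by
    rw [Matrix.det_fromBlocks_zero₁₂]
    exact hAunit.mul hDunit
  have hkey : (Matrix.fromBlocks Ahat 0 W D)⁻¹ * Matrix.fromBlocks Ahat Wᵀ W D
      = Matrix.fromBlocks 1 X 0 Y := by
    rw [← hprod, ← Matrix.mul_assoc, nonsing_inv_mul _ hBTdet, Matrix.one_mul]
  rw [hkey] at hμ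
  -- complexify
  set f : ℝ →+* ℂ := Complex.ofRealHom with hf
  have hmap : (Matrix.fromBlocks 1 X 0 Y).map Complex.ofReal
      = Matrix.fromBlocks (1 : Matrix (Fin n₁) (Fin n₁) ℂ) (X.map Complex.ofReal)
        (0 : Matrix (Fin n₂) (Fin n₁) ℂ) (Y.map Complex.ofReal) := by
    rw [Matrix.fromBlocks_map]
    rw [Matrix.map_one _ Complex.ofReal_zero Complex.ofReal_one,
      Matrix.map_zero _ Complex.ofReal_zero]
  rw [hmap] at hμ
  rw [spectrum.mem_iff] at hμ
  have hdet : ((algebraMap ℂ (Matrix (Fin n₁ ⊕ Fin n₂) (Fin n₁ ⊕ Fin n₂) ℂ)) μ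
      - Matrix.fromBlocks 1 (X.map Complex.ofReal) 0 (Y.map Complex.ofReal)).det = 0 := by
    by_contra hd
    exact hμ ((Matrix.isUnit_iff_isUnit_det _).2 (Ne.isUnit hd))
  rw [Algebra.algebraMap_eq_smul_one,
    show (1 : Matrix (Fin n₁ ⊕ Fin n₂) (Fin n₁ ⊕ Fin n₂) ℂ)
      = Matrix.fromBlocks (1 : Matrix (Fin n₁) (Fin n₁) ℂ) 0 0 (1 : Matrix (Fin n₂) (Fin n₂) ℂ)
      from Matrix.fromBlocks_one.symm, Matrix.fromBlocks_smul,
    sub_eq_add_neg, Matrix.fromBlocks_neg, Matrix.fromBlocks_add] at hdet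
  simp only [smul_zero, neg_zero, add_zero, zero_add] at hdet
  rw [Matrix.det_fromBlocks_zero₂₁] at hdet
  by_cases hμ1 : μ = 1
  · subst hμ1
    exact ⟨rfl, one_pos⟩
  have h1 : (μ • (1 : Matrix (Fin n₁) (Fin n₁) ℂ) + -(1 : Matrix (Fin n₁) (Fin n₁) ℂ)).det
      ≠ 0 := by
    rw [show μ • (1 : Matrix (Fin n₁) (Fin n₁) ℂ) + -1 = (μ - 1) • 1 by
      rw [sub_smul, one_smul, sub_eq_add_neg]]
    rw [Matrix.det_smul, Matrix.det_one, mul_one]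
    exact pow_ne_zero _ (sub_ne_zero.2 hμ1)
  have hdet2 : (μ • (1 : Matrix (Fin n₂) (Fin n₂) ℂ) + -(Y.map Complex.ofReal)).det = 0 := by
    rcases mul_eq_zero.1 hdet with h | h
    · exact absurd h h1
    · exact h
  obtain ⟨v, hv0, hv⟩ := (Matrix.exists_mulVec_eq_zero_iff).2 hdet2
  have hvY : (Y.map Complex.ofReal) *ᵥ v = μ • v := by
    have h2 := hv
    rw [Matrix.add_mulVec, Matrix.neg_mulVec, Matrix.smul_mulVec, Matrix.one_mulVec,
      add_neg_eq_zero] at h2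
    exact h2.symm
  have hYmapmul : (D.map Complex.ofReal) * (Y.map Complex.ofReal) = S.map Complex.ofReal := by
    have h4 : (D.map ⇑f) * ((D⁻¹ * S).map ⇑f) = S.map ⇑f := by
      rw [Matrix.map_mul, ← Matrix.mul_assoc, ← Matrix.map_mul, hDinv,
        Matrix.map_one _ (map_zero f) (map_one f), Matrix.one_mul]
    rw [hYdef]
    exact h4
  have hvS : (S.map Complex.ofReal) *ᵥ v = μ • ((D.map Complex.ofReal) *ᵥ v) := by
    rw [← hYmapmul, ← Matrix.mulVec_mulVec, hvY, Matrix.mulVec_smul]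
  have hp := posdef_complexify hS v hv0
  have hq := posdef_complexify hD v hv0
  set p := star v ⬝ᵥ ((S.map Complex.ofReal) *ᵥ v) with hpdef
  set q := star v ⬝ᵥ ((D.map Complex.ofReal) *ᵥ v) with hqdef
  have hpq : p = μ * q := by
    rw [hpdef, hvS, dotProduct_smul, smul_eq_mul]
  have hqne : q ≠ 0 := by
    intro h0
    rw [h0] at hq
    simpa using hq.2
  have hμ2 : μ = p / q := by
    rw [hpq, mul_div_assoc, div_self hqne, mul_one]
  have hp' : p = ((p.re : ℝ) : ℂ) := by
    rw [Complex.ext_iff]; simp [hp.1]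
  have hq' : q = ((q.re : ℝ) : ℂ) := by
    rw [Complex.ext_iff]; simp [hq.1]
  have hμval : μ = ((p.re / q.re : ℝ) : ℂ) := by
    have h3 : ((p.re / q.re : ℝ) : ℂ) = p / q := by
      rw [Complex.ofReal_div, ← hp', ← hq']
    rw [hμ2]
    exact h3.symm
  constructor
  · rw [hμval]; simp
  · rw [hμval]
    simp only [Complex.ofReal_re]
    exact div_pos hp.2 hq.2
end

section
/- Let n₁, n₂ be positive integers, Â an invertible real n₁×n₁ matrix, D an invertible real n₂×n₂ matrix, and W a real n₂×n₁ matrix. Form A = [[Â, Wᵀ],[W, D]] and B_T = [[Â, 0],[W, D]]. Suppose μ ∈ ℝ with μ ≠ 1 and v = (v₁, v₂) ≠ 0 (with v₁ ∈ ℝ^{n₁}, v₂ ∈ ℝ^{n₂}) satisfy B_T⁻¹ A v = μ v. Then v₁ ≠ 0 and (Â - Wᵀ D⁻¹ W) v₁ = μ Â v₁; equivalently, (I - Â⁻¹ Wᵀ D⁻¹ W) v₁ = μ v₁. -/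
open Matrix

/-- If `μ ≠ 1` is an eigenvalue of `B_T⁻¹ A` with eigenvector `v = (v₁, v₂) ≠ 0`, then
`v₁ ≠ 0` and `(Â - Wᵀ D⁻¹ W) v₁ = μ Â v₁`; equivalently
`(I - Â⁻¹ Wᵀ D⁻¹ W) v₁ = μ v₁`.  Here `A = [[Â, Wᵀ],[W, D]]` and
`B_T = [[Â, 0],[W, D]]` with `Â` and `D` invertible. -/
theorem blockTriangular_eigenvector_first_component
    (n₁ n₂ : ℕ) (hn₁ : 0 < n₁) (hn₂ : 0 < n₂)
    (Ahat : Matrix (Fin n₁) (Fin n₁) ℝ) (hA : IsUnit Ahat.det)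
    (D : Matrix (Fin n₂) (Fin n₂) ℝ) (hD : IsUnit D.det)
    (W : Matrix (Fin n₂) (Fin n₁) ℝ)
    (A : Matrix (Fin n₁ ⊕ Fin n₂) (Fin n₁ ⊕ Fin n₂) ℝ)
    (hAdef : A = Matrix.fromBlocks Ahat Wᵀ W D)
    (BT : Matrix (Fin n₁ ⊕ Fin n₂) (Fin n₁ ⊕ Fin n₂) ℝ)
    (hBT : BT = Matrix.fromBlocks Ahat 0 W D)
    (μ : ℝ) (hμ : μ ≠ 1)
    (v₁ : Fin n₁ → ℝ) (v₂ : Fin n₂ → ℝ)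
    (hv : Sum.elim v₁ v₂ ≠ 0)
    (heig : (BT⁻¹ * A) *ᵥ Sum.elim v₁ v₂ = μ • Sum.elim v₁ v₂) :
    v₁ ≠ 0 ∧ (Ahat - Wᵀ * D⁻¹ * W) *ᵥ v₁ = μ • (Ahat *ᵥ v₁) ∧
      (1 - Ahat⁻¹ * Wᵀ * D⁻¹ * W) *ᵥ v₁ = μ • v₁ := by
  have hBTu : IsUnit BT.det := by
    rw [hBT, Matrix.det_fromBlocks_zero₁₂]
    exact hA.mul hD
  -- A v = μ • BT v
  have key : A *ᵥ Sum.elim v₁ v₂ = μ • (BT *ᵥ Sum.elim v₁ v₂) := by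
    have := congrArg (fun w => BT *ᵥ w) heig
    simp only [Matrix.mulVec_smul] at this
    rwa [Matrix.mulVec_mulVec, ← Matrix.mul_assoc,
      Matrix.mul_nonsing_inv _ hBTu, Matrix.one_mul] at this
  rw [hAdef, hBT] at key
  rw [Matrix.fromBlocks_mulVec, Matrix.fromBlocks_mulVec] at key
  have htop := congrFun key
  have h1 : Ahat *ᵥ v₁ + Wᵀ *ᵥ v₂ = μ • (Ahat *ᵥ v₁) := by
    funext i
    have := congrFun key (Sum.inl i)
    simpa using this
  have h2 : W *ᵥ v₁ + D *ᵥ v₂ = μ • (W *ᵥ v₁ + D *ᵥ v₂) := by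
    funext i
    have := congrFun key (Sum.inr i)
    simpa [smul_add] using this
  have h3 : W *ᵥ v₁ + D *ᵥ v₂ = 0 := by
    have : (1 - μ) • (W *ᵥ v₁ + D *ᵥ v₂) = 0 := by
      rw [sub_smul, one_smul, ← h2, sub_self]
    have hne : (1 : ℝ) - μ ≠ 0 := sub_ne_zero.mpr (Ne.symm hμ)
    exact (smul_eq_zero.mp this).resolve_left hne
  have hv2 : v₂ = -(D⁻¹ *ᵥ (W *ᵥ v₁)) := by
    have hD2 : D *ᵥ v₂ = -(W *ᵥ v₁) := by
      linear_combination (norm := module) h3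
    have := congrArg (fun w => D⁻¹ *ᵥ w) hD2
    simpa [Matrix.mulVec_mulVec, Matrix.mulVec_neg, Matrix.nonsing_inv_mul _ hD] using this
  have hv1 : v₁ ≠ 0 := by
    intro h0
    apply hv
    have : v₂ = 0 := by simp [hv2, h0]
    funext i
    cases i <;> simp [h0, this]
  have hmain : (Ahat - Wᵀ * D⁻¹ * W) *ᵥ v₁ = μ • (Ahat *ᵥ v₁) := by
    rw [Matrix.sub_mulVec, ← h1]
    rw [hv2]
    simp [Matrix.mulVec_neg, Matrix.mulVec_mulVec, Matrix.mul_assoc, sub_eq_add_neg]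
  refine ⟨hv1, hmain, ?_⟩
  have := congrArg (fun w => Ahat⁻¹ *ᵥ w) hmain
  simp only [Matrix.mulVec_smul, Matrix.mulVec_mulVec, ← Matrix.mul_assoc,
    Matrix.nonsing_inv_mul _ hA, Matrix.one_mulVec] at this
  rw [Matrix.mul_sub] at this
  simpa [Matrix.nonsing_inv_mul _ hA, Matrix.mul_assoc] using this
end

section
/- Let n, m, N be positive integers, K₀ a symmetric positive definite real n×n matrix, K₁, …, K_m symmetric real n×n matrices, and g₁, …, g_m vectors in ℝ^N satisfying g_lᵀ g_k = 0 for l ≠ k and g_kᵀ g_k = c for all k, with c ≥ 0. Define Â = K₀, W = Σ_{k=1}^m g_k ⊗ K_k, D = I_N ⊗ K₀, A = [[Â, Wᵀ],[W, D]], and B_T = [[Â, 0],[W, D]]. Suppose for each k every eigenvalue of K₀⁻¹ K_k lies in [-β_k, β_k] with β_k ≥ 0. Then every real eigenvalue μ of B_T⁻¹ A satisfies μ ≥ 1 - c · Σ_{k=1}^m β_k². -/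
open Matrix Kronecker

set_option linter.unusedSectionVars false

lemma aux_herm_sq_bound {n : ℕ} {S : Matrix (Fin n) (Fin n) ℝ} (hS : S.IsHermitian) {β : ℝ}
    (hβ : ∀ i, |hS.eigenvalues i| ≤ β) (u : Fin n → ℝ) :
    u ⬝ᵥ (S *ᵥ (S *ᵥ u)) ≤ β ^ 2 * (u ⬝ᵥ u) := by
  have hST : Sᵀ = S := by
    rw [← Matrix.conjTranspose_eq_transpose_of_trivial, hS.eq]
  set U : Matrix (Fin n) (Fin n) ℝ := (hS.eigenvectorUnitary : Matrix (Fin n) (Fin n) ℝ) with hUdef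
  have hU1 : U * star U = 1 := (Matrix.mem_unitaryGroup_iff).mp hS.eigenvectorUnitary.2
  have hU2 : star U * U = 1 := (Matrix.mem_unitaryGroup_iff').mp hS.eigenvectorUnitary.2
  have hpres : ∀ (P : Matrix (Fin n) (Fin n) ℝ), Pᵀ * P = 1 →
      ∀ a : Fin n → ℝ, (P *ᵥ a) ⬝ᵥ (P *ᵥ a) = a ⬝ᵥ a := by
    intro P hP a
    rw [Matrix.dotProduct_mulVec, ← Matrix.mulVec_transpose, Matrix.mulVec_mulVec, hP,
      Matrix.one_mulVec]
  have hstarT : (star U : Matrix (Fin n) (Fin n) ℝ) = Uᵀ := by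
    rw [Matrix.star_eq_conjTranspose, Matrix.conjTranspose_eq_transpose_of_trivial]
  have hspec : S = U * Matrix.diagonal hS.eigenvalues * star U := by
    have := hS.spectral_theorem
    simpa using this
  have hdot : u ⬝ᵥ (S *ᵥ (S *ᵥ u)) = (S *ᵥ u) ⬝ᵥ (S *ᵥ u) := by
    rw [Matrix.dotProduct_mulVec, ← Matrix.mulVec_transpose, hST]
  rw [hdot]
  have hSu : S *ᵥ u = U *ᵥ (Matrix.diagonal hS.eigenvalues *ᵥ (star U *ᵥ u)) := by
    conv_lhs => rw [hspec]
    rw [← Matrix.mulVec_mulVec, ← Matrix.mulVec_mulVec]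
  set w : Fin n → ℝ := star U *ᵥ u with hw
  rw [hSu, hpres U (by rw [← hstarT, hU2]) _]
  have hww : w ⬝ᵥ w = u ⬝ᵥ u := by
    rw [hw, hstarT]
    exact hpres Uᵀ (by rw [Matrix.transpose_transpose, ← hstarT, hU1]) u
  rw [← hww]
  simp only [dotProduct, Matrix.mulVec_diagonal]
  rw [Finset.mul_sum]
  apply Finset.sum_le_sum
  intro i _
  obtain ⟨h1, h2⟩ := abs_le.mp (hβ i)
  have h3 : hS.eigenvalues i ^ 2 ≤ β ^ 2 := sq_le_sq' h1 h2
  nlinarith [sq_nonneg (w i)]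

section helpers
variable {ι κ : Type*} [Fintype ι] [Fintype κ]

lemma aux_sum_dot (s : Finset ι) (f : ι → (κ → ℝ)) (w : κ → ℝ) :
    (∑ i ∈ s, f i) ⬝ᵥ w = ∑ i ∈ s, f i ⬝ᵥ w := by
  simp only [dotProduct, Finset.sum_apply, Finset.sum_mul]
  exact Finset.sum_comm

lemma aux_dot_sum (s : Finset ι) (w : κ → ℝ) (f : ι → (κ → ℝ)) :
    w ⬝ᵥ (∑ i ∈ s, f i) = ∑ i ∈ s, w ⬝ᵥ f i := by
  simp only [dotProduct, Finset.sum_apply, Finset.mul_sum]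
  exact Finset.sum_comm

lemma aux_mulVec_sum {κ' : Type*} [Fintype κ'] (M : Matrix κ' κ ℝ) (s : Finset ι)
    (f : ι → (κ → ℝ)) : M *ᵥ (∑ i ∈ s, f i) = ∑ i ∈ s, M *ᵥ f i := by
  funext p
  simp only [Matrix.mulVec, dotProduct, Finset.sum_apply, Finset.mul_sum]
  exact Finset.sum_comm

lemma aux_kron_dot {N n : ℕ} (M : Matrix (Fin n) (Fin n) ℝ) (z w : Fin N × Fin n → ℝ) :
    z ⬝ᵥ (((1 : Matrix (Fin N) (Fin N) ℝ) ⊗ₖ M) *ᵥ w)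
      = ∑ i, (fun p => z (i, p)) ⬝ᵥ (M *ᵥ fun p => w (i, p)) := by
  rw [dotProduct, Fintype.sum_prod_type]
  refine Finset.sum_congr rfl fun i _ => ?_
  rw [dotProduct]
  refine Finset.sum_congr rfl fun p _ => ?_
  congr 1
  rw [Matrix.mulVec, dotProduct, Matrix.mulVec, dotProduct,
    Fintype.sum_prod_type]
  rw [Finset.sum_eq_single i]
  · simp [Matrix.kroneckerMap_apply, Matrix.one_apply]
  · intro j _ hj
    simp [Matrix.kroneckerMap_apply, Matrix.one_apply, Ne.symm hj]
  · intro h; exact absurd (Finset.mem_univ i) h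

end helpers

open scoped MatrixOrder in
lemma aux_quad_bound{n : ℕ} {K₀ Kk : Matrix (Fin n) (Fin n) ℝ} (hK₀ : K₀.PosDef)
    (hKk : Kk.IsHermitian) {β : ℝ}
    (hb : ∀ (ν : ℝ) (w : Fin n → ℝ), w ≠ 0 → (K₀⁻¹ * Kk) *ᵥ w = ν • w → -β ≤ ν ∧ ν ≤ β)
    (x : Fin n → ℝ) :
    x ⬝ᵥ ((Kk * K₀⁻¹ * Kk) *ᵥ x) ≤ β ^ 2 * (x ⬝ᵥ (K₀ *ᵥ x)) := by
  classical
  set L : Matrix (Fin n) (Fin n) ℝ := CFC.sqrt K₀ with hLdef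
  have hL2 : L * L = K₀ := CFC.sqrt_mul_sqrt_self K₀ hK₀.posSemidef.nonneg
  have hLh : L.IsHermitian := (CFC.sqrt_nonneg K₀).posSemidef.1
  have hLT : Lᵀ = L := by rw [← Matrix.conjTranspose_eq_transpose_of_trivial, hLh.eq]
  have hdetL : IsUnit L.det := by
    have h1 : L.det * L.det = K₀.det := by rw [← Matrix.det_mul, hL2]
    have h2 : K₀.det ≠ 0 := ne_of_gt hK₀.det_pos
    rw [isUnit_iff_ne_zero]
    intro h0
    rw [h0, mul_zero] at h1
    exact h2 h1.symm
  haveI : Invertible L := L.invertibleOfIsUnitDet hdetL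
  have hLi : L * L⁻¹ = 1 := Matrix.mul_nonsing_inv L hdetL
  have hiL : L⁻¹ * L = 1 := Matrix.nonsing_inv_mul L hdetL
  have hK₀inv : K₀⁻¹ = L⁻¹ * L⁻¹ := by rw [← hL2, Matrix.mul_inv_rev]
  set S : Matrix (Fin n) (Fin n) ℝ := L⁻¹ * Kk * L⁻¹ with hSdef
  have hiLh : (L⁻¹).IsHermitian := hLh.inv
  have hSh : S.IsHermitian := by
    have := Matrix.isHermitian_mul_mul_conjTranspose (L⁻¹) hKk
    rwa [hiLh.eq] at this
  have hLiT : (L⁻¹)ᵀ = L⁻¹ := by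
    rw [← Matrix.conjTranspose_eq_transpose_of_trivial, hiLh.eq]
  -- eigenvalue bound for S
  have hev : ∀ i, |hSh.eigenvalues i| ≤ β := by
    intro i
    set e : Fin n → ℝ := ⇑(hSh.eigenvectorBasis i) with hedef
    have he : S *ᵥ e = hSh.eigenvalues i • e := hSh.mulVec_eigenvectorBasis i
    have henz : e ≠ 0 := by
      have := hSh.eigenvectorBasis.orthonormal.ne_zero i
      intro h
      apply this
      ext p
      exact congrFun h p
    set w : Fin n → ℝ := L⁻¹ *ᵥ e with hwdef
    have hwnz : w ≠ 0 := by
      intro h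
      apply henz
      have : L *ᵥ w = e := by
        rw [hwdef, Matrix.mulVec_mulVec, hLi, Matrix.one_mulVec]
      rw [h, Matrix.mulVec_zero] at this
      exact this.symm
    have heq : (K₀⁻¹ * Kk) *ᵥ w = hSh.eigenvalues i • w := by
      have hm : (K₀⁻¹ * Kk) * L⁻¹ = L⁻¹ * S := by
        rw [hK₀inv, hSdef]
        noncomm_ring
      rw [hwdef, Matrix.mulVec_mulVec, hm, ← Matrix.mulVec_mulVec, he,
        Matrix.mulVec_smul]
    have := hb _ _ hwnz heq
    exact abs_le.mpr this
  -- express quadratic form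
  have hKKK : Kk * K₀⁻¹ * Kk = L * (S * (S * L)) := by
    rw [hK₀inv, hSdef]
    calc Kk * (L⁻¹ * L⁻¹) * Kk
        = (1 : Matrix (Fin n) (Fin n) ℝ) * Kk * (L⁻¹ * L⁻¹) * Kk * 1 := by rw [one_mul, mul_one]
      _ = (L * L⁻¹) * Kk * (L⁻¹ * L⁻¹) * Kk * (L⁻¹ * L) := by rw [hLi, hiL]
      _ = L * (L⁻¹ * Kk * L⁻¹ * (L⁻¹ * Kk * L⁻¹ * L)) := by noncomm_ring
  have hLdot : ∀ a b : Fin n → ℝ, a ⬝ᵥ (L *ᵥ b) = (L *ᵥ a) ⬝ᵥ b := by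
    intro a b
    rw [Matrix.dotProduct_mulVec, ← Matrix.mulVec_transpose, hLT]
  have hdotL : (L *ᵥ x) ⬝ᵥ (L *ᵥ x) = x ⬝ᵥ (K₀ *ᵥ x) := by
    rw [← hLdot, Matrix.mulVec_mulVec, hL2]
  calc x ⬝ᵥ ((Kk * K₀⁻¹ * Kk) *ᵥ x)
      = x ⬝ᵥ (L *ᵥ (S *ᵥ (S *ᵥ (L *ᵥ x)))) := by
        rw [hKKK]; simp only [Matrix.mulVec_mulVec, Matrix.mul_assoc]
    _ = (L *ᵥ x) ⬝ᵥ (S *ᵥ (S *ᵥ (L *ᵥ x))) := hLdot _ _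
    _ ≤ β ^ 2 * ((L *ᵥ x) ⬝ᵥ (L *ᵥ x)) := aux_herm_sq_bound hSh hev (L *ᵥ x)
    _ = β ^ 2 * (x ⬝ᵥ (K₀ *ᵥ x)) := by rw [hdotL]

/-- Lower eigenvalue bound for the block-triangular preconditioned Galerkin
matrix in the case `p = 1`: with `Â = K₀`, `W = Σ_k g_k ⊗ K_k`, `D = I_N ⊗ K₀`,
pairwise orthogonal `g_k` of common squared norm `c ≥ 0`, and the eigenvalues of
each `K₀⁻¹ K_k` contained in `[-β_k, β_k]`, every real eigenvalue `μ` of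
`B_T⁻¹ A` satisfies `μ ≥ 1 - c Σ_k β_k²`. -/
theorem blockTriangular_eigenvalue_lower_bound_p_one
    (n m N : ℕ) (hn : 0 < n) (hm : 0 < m) (hN : 0 < N)
    (K₀ : Matrix (Fin n) (Fin n) ℝ) (hK₀ : K₀.PosDef)
    (K : Fin m → Matrix (Fin n) (Fin n) ℝ) (hK : ∀ k, (K k).IsHermitian)
    (g : Fin m → (Fin N → ℝ)) (c : ℝ) (hc : 0 ≤ c)
    (horth : ∀ l k, l ≠ k → g l ⬝ᵥ g k = 0)
    (hnorm : ∀ k, g k ⬝ᵥ g k = c)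
    (W : Matrix (Fin N × Fin n) (Fin n) ℝ)
    (hW : W = ∑ k, Matrix.reindex (Equiv.refl (Fin N × Fin n)) (Equiv.punitProd (Fin n))
        ((Matrix.replicateCol Unit (g k)) ⊗ₖ K k))
    (D : Matrix (Fin N × Fin n) (Fin N × Fin n) ℝ)
    (hD : D = (1 : Matrix (Fin N) (Fin N) ℝ) ⊗ₖ K₀)
    (β : Fin m → ℝ) (hβ : ∀ k, 0 ≤ β k)
    (hbound : ∀ k (ν : ℝ) (v : Fin n → ℝ), v ≠ 0 → (K₀⁻¹ * K k) *ᵥ v = ν • v →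
      -β k ≤ ν ∧ ν ≤ β k)
    (A : Matrix (Fin n ⊕ Fin N × Fin n) (Fin n ⊕ Fin N × Fin n) ℝ)
    (hAdef : A = Matrix.fromBlocks K₀ Wᵀ W D)
    (BT : Matrix (Fin n ⊕ Fin N × Fin n) (Fin n ⊕ Fin N × Fin n) ℝ)
    (hBT : BT = Matrix.fromBlocks K₀ 0 W D)
    (μ : ℝ) (v : Fin n ⊕ Fin N × Fin n → ℝ) (hv : v ≠ 0)
    (heig : (BT⁻¹ * A) *ᵥ v = μ • v) :
    1 - c * ∑ k, (β k) ^ 2 ≤ μ := by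
  classical
  have hsum_nonneg : 0 ≤ c * ∑ k, (β k) ^ 2 :=
    mul_nonneg hc (Finset.sum_nonneg fun k _ => sq_nonneg _)
  by_cases hμ : μ = 1
  · rw [hμ]; linarith
  -- invertibility facts
  have hK₀det : IsUnit K₀.det := isUnit_iff_ne_zero.mpr (ne_of_gt hK₀.det_pos)
  have hDdet : IsUnit D.det := by
    rw [hD, Matrix.det_kronecker, Matrix.det_one, one_pow, one_mul]
    exact hK₀det.pow _
  have hBTdet : IsUnit BT.det := by
    rw [hBT, Matrix.det_fromBlocks_zero₁₂]
    exact hK₀det.mul hDdet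
  -- eigen equation
  have hABT : A *ᵥ v = μ • (BT *ᵥ v) := by
    have h1 : BT *ᵥ ((BT⁻¹ * A) *ᵥ v) = BT *ᵥ (μ • v) := by rw [heig]
    rwa [Matrix.mulVec_mulVec, ← Matrix.mul_assoc, Matrix.mul_nonsing_inv _ hBTdet,
      Matrix.one_mul, Matrix.mulVec_smul] at h1
  set x : Fin n → ℝ := fun i => v (Sum.inl i) with hxdef
  set y : Fin N × Fin n → ℝ := fun ip => v (Sum.inr ip) with hydef
  have hvxy : v = Sum.elim x y := by funext s; cases s <;> rfl
  rw [hvxy, hAdef, hBT, Matrix.fromBlocks_mulVec, Matrix.fromBlocks_mulVec] at hABT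
  have hE1 : K₀ *ᵥ x + Wᵀ *ᵥ y = μ • (K₀ *ᵥ x) := by
    funext i
    have h := congrFun hABT (Sum.inl i)
    simpa using h
  have hE2 : W *ᵥ x + D *ᵥ y = μ • (W *ᵥ x + D *ᵥ y) := by
    funext ip
    have h := congrFun hABT (Sum.inr ip)
    simpa using h
  have hsum0 : W *ᵥ x + D *ᵥ y = 0 := by
    have h1 : (1 - μ) • (W *ᵥ x + D *ᵥ y) = 0 := by
      rw [sub_smul, one_smul, sub_eq_zero]
      exact hE2
    rcases smul_eq_zero.mp h1 with h | h
    · have : μ = 1 := by linarith [sub_eq_zero.mp (by linarith : (1 : ℝ) - μ = 0)]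
      exact absurd this hμ
    · exact h
  have hDy : D *ᵥ y = -(W *ᵥ x) := by
    rw [eq_neg_iff_add_eq_zero, add_comm]
    exact hsum0
  have hDinvD : D⁻¹ * D = 1 := Matrix.nonsing_inv_mul _ hDdet
  have hxne : x ≠ 0 := by
    intro h0
    apply hv
    have hWx : W *ᵥ x = 0 := by rw [h0, Matrix.mulVec_zero]
    have hy0 : y = 0 := by
      have hy1 : y = D⁻¹ *ᵥ (D *ᵥ y) := by
        rw [Matrix.mulVec_mulVec, hDinvD, Matrix.one_mulVec]
      rw [hDy, hWx, neg_zero, Matrix.mulVec_zero] at hy1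
      exact hy1
    rw [hvxy, h0, hy0]
    funext s; cases s <;> rfl
  have ht : 0 < x ⬝ᵥ (K₀ *ᵥ x) := by
    have := hK₀.dotProduct_mulVec_pos hxne
    simpa using this
  have h1 : Wᵀ *ᵥ y = (μ - 1) • (K₀ *ᵥ x) := by
    rw [sub_smul, one_smul]
    exact eq_sub_of_add_eq' hE1
  have h2 : x ⬝ᵥ (Wᵀ *ᵥ y) = (μ - 1) * (x ⬝ᵥ (K₀ *ᵥ x)) := by
    rw [h1, dotProduct_smul, smul_eq_mul]
  have h3 : x ⬝ᵥ (Wᵀ *ᵥ y) = (W *ᵥ x) ⬝ᵥ y := by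
    rw [Matrix.dotProduct_mulVec, Matrix.vecMul_transpose]
  have h4 : (W *ᵥ x) ⬝ᵥ y = -(y ⬝ᵥ (D *ᵥ y)) := by
    have hwx : W *ᵥ x = -(D *ᵥ y) := by rw [hDy, neg_neg]
    rw [hwx, neg_dotProduct, dotProduct_comm]
  have hscal : (1 - μ) * (x ⬝ᵥ (K₀ *ᵥ x)) = y ⬝ᵥ (D *ᵥ y) := by
    have h5 : (μ - 1) * (x ⬝ᵥ (K₀ *ᵥ x)) = -(y ⬝ᵥ (D *ᵥ y)) := by rw [← h2, h3, h4]
    linear_combination -h5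
  have hDinv : D⁻¹ = (1 : Matrix (Fin N) (Fin N) ℝ) ⊗ₖ K₀⁻¹ := by
    rw [hD, Matrix.inv_kronecker, inv_one]
  set z : Fin N × Fin n → ℝ := W *ᵥ x with hzdef
  have hyDy : y ⬝ᵥ (D *ᵥ y) = z ⬝ᵥ (D⁻¹ *ᵥ z) := by
    have hyeq : y = -(D⁻¹ *ᵥ z) := by
      have hy1 : y = D⁻¹ *ᵥ (D *ᵥ y) := by
        rw [Matrix.mulVec_mulVec, hDinvD, Matrix.one_mulVec]
      rw [hDy, Matrix.mulVec_neg] at hy1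
      exact hy1
    conv_lhs => rw [hDy, hyeq]
    rw [neg_dotProduct, dotProduct_neg, neg_neg, dotProduct_comm]
  have hWe : ∀ (i : Fin N) (p q : Fin n), W (i, p) q = ∑ k, g k i * K k p q := by
    intro i p q
    rw [hW]
    simp [Matrix.sum_apply, Matrix.reindex_apply, Matrix.submatrix_apply,
      Matrix.kroneckerMap_apply, Matrix.replicateCol_apply]
  have hzblock : ∀ i : Fin N, (fun p => z (i, p)) = ∑ k, g k i • (K k *ᵥ x) := by
    intro i
    funext p
    have hz1 : z (i, p) = ∑ q, W (i, p) q * x q := rfl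
    simp only [hz1, hWe, Finset.sum_mul, Finset.sum_apply, Pi.smul_apply, smul_eq_mul]
    rw [Finset.sum_comm]
    refine Finset.sum_congr rfl fun k _ => ?_
    rw [Matrix.mulVec, dotProduct, Finset.mul_sum]
    exact Finset.sum_congr rfl fun q _ => by ring
  have hzD : z ⬝ᵥ (D⁻¹ *ᵥ z) = ∑ k, c * (x ⬝ᵥ ((K k * K₀⁻¹ * K k) *ᵥ x)) := by
    rw [hDinv, aux_kron_dot]
    have hterm : ∀ i : Fin N, (fun p => z (i, p)) ⬝ᵥ (K₀⁻¹ *ᵥ fun p => z (i, p))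
        = ∑ k, ∑ l, (g k i * g l i) * ((K k *ᵥ x) ⬝ᵥ (K₀⁻¹ *ᵥ (K l *ᵥ x))) := by
      intro i
      rw [hzblock i, aux_mulVec_sum, aux_sum_dot]
      refine Finset.sum_congr rfl fun k _ => ?_
      rw [aux_dot_sum]
      refine Finset.sum_congr rfl fun l _ => ?_
      rw [Matrix.mulVec_smul, smul_dotProduct, dotProduct_smul,
        smul_eq_mul, smul_eq_mul]
      ring
    rw [Finset.sum_congr rfl fun i _ => hterm i, Finset.sum_comm]
    refine Finset.sum_congr rfl fun k _ => ?_
    rw [Finset.sum_comm]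
    have hcoef : ∀ l, (∑ i, (g k i * g l i) * ((K k *ᵥ x) ⬝ᵥ (K₀⁻¹ *ᵥ (K l *ᵥ x))))
        = (g k ⬝ᵥ g l) * ((K k *ᵥ x) ⬝ᵥ (K₀⁻¹ *ᵥ (K l *ᵥ x))) := by
      intro l
      conv_rhs => rw [dotProduct, Finset.sum_mul]
    rw [Finset.sum_congr rfl fun l _ => hcoef l, Finset.sum_eq_single k]
    · rw [hnorm k]
      congr 1
      have hKkT : (K k)ᵀ = K k := by
        rw [← Matrix.conjTranspose_eq_transpose_of_trivial, (hK k).eq]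
      conv_rhs => rw [← Matrix.mulVec_mulVec, ← Matrix.mulVec_mulVec,
        Matrix.dotProduct_mulVec, ← Matrix.mulVec_transpose, hKkT]
    · intro l _ hlk
      rw [horth k l (Ne.symm hlk), zero_mul]
    · intro hk
      exact absurd (Finset.mem_univ k) hk
  have hineq : z ⬝ᵥ (D⁻¹ *ᵥ z) ≤ (c * ∑ k, (β k) ^ 2) * (x ⬝ᵥ (K₀ *ᵥ x)) := by
    rw [hzD]
    calc ∑ k, c * (x ⬝ᵥ ((K k * K₀⁻¹ * K k) *ᵥ x))
        ≤ ∑ k, c * (β k ^ 2 * (x ⬝ᵥ (K₀ *ᵥ x))) :=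
          Finset.sum_le_sum fun k _ =>
            mul_le_mul_of_nonneg_left (aux_quad_bound hK₀ (hK k) (hbound k) x) hc
      _ = (c * ∑ k, (β k) ^ 2) * (x ⬝ᵥ (K₀ *ᵥ x)) := by
          rw [← Finset.mul_sum, ← Finset.sum_mul, mul_assoc]
  have hfin : (1 - μ) * (x ⬝ᵥ (K₀ *ᵥ x)) ≤ (c * ∑ k, (β k) ^ 2) * (x ⬝ᵥ (K₀ *ᵥ x)) := by
    rw [hscal, hyDy]
    exact hineq
  linarith [le_of_mul_le_mul_right hfin ht]
end

section
/- Let Ω be a measurable subset of ℝ^d, ā > 0 a constant, and w : Ω → ℝ a measurable function with w_min ≤ w(x) ≤ w_max for almost every x ∈ Ω. Let φ₁, …, φ_n : ℝ^d → ℝ be differentiable functions whose gradients ∇φ_s are square-integrable on Ω, and define the n×n matrices K₀(r,s) = ∫_Ω ā ∇φ_s(x)·∇φ_r(x) dx and K(r,s) = ∫_Ω w(x) ∇φ_s(x)·∇φ_r(x) dx. Assume K₀ is positive definite. Then every real eigenvalue μ of K₀⁻¹ K satisfies w_min/ā ≤ μ ≤ w_max/ā. -/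
open Matrix MeasureTheory

lemma integrable_inner_of_memL2 {α : Type*} {m : MeasurableSpace α} {μ : Measure α}
    {E : Type*} [NormedAddCommGroup E] [InnerProductSpace ℝ E]
    {f g : α → E} (hf : MemLp f 2 μ) (hg : MemLp g 2 μ) :
    Integrable (fun x => (inner ℝ (f x) (g x) : ℝ)) μ := by
  have h := L2.integrable_inner (𝕜 := ℝ) (hf.toLp f) (hg.toLp g)
  apply h.congr
  filter_upwards [hf.coeFn_toLp, hg.coeFn_toLp] with x h1 h2
  rw [h1, h2]

lemma quad_form_integral {α : Type*} {m : MeasurableSpace α} {μ : Measure α}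
    {E : Type*} [NormedAddCommGroup E] [InnerProductSpace ℝ E]
    {n : ℕ} (a : Fin n → α → E) (c : α → ℝ) (z : Fin n → ℝ)
    (hci : ∀ r s : Fin n, Integrable (fun x => c x * (inner ℝ (a s x) (a r x) : ℝ)) μ) :
    ∑ r, z r * ∑ s, (∫ x, c x * (inner ℝ (a s x) (a r x) : ℝ) ∂μ) * z s
      = ∫ x, c x * (inner ℝ (∑ s, z s • a s x) (∑ s, z s • a s x) : ℝ) ∂μ := by
  have h1 : ∀ r, z r * ∑ s, (∫ x, c x * (inner ℝ (a s x) (a r x) : ℝ) ∂μ) * z s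
      = ∫ x, ∑ s, z r * ((c x * (inner ℝ (a s x) (a r x) : ℝ)) * z s) ∂μ := by
    intro r
    rw [integral_finset_sum _ (fun s _ => (((hci r s).mul_const (z s)).const_mul (z r)))]
    rw [Finset.mul_sum]
    congr 1; ext s
    rw [integral_const_mul, integral_mul_const]
  simp_rw [h1]
  rw [← integral_finset_sum _ (fun r _ => integrable_finset_sum _
      (fun s _ => (((hci r s).mul_const (z s)).const_mul (z r))))]
  congr 1; ext x
  simp only [sum_inner, inner_sum, real_inner_smul_left, real_inner_smul_right,
    Finset.mul_sum]
  rw [Finset.sum_comm]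
  refine Finset.sum_congr rfl fun s _ => Finset.sum_congr rfl fun r _ => by rw [real_inner_comm (a r x) (a s x)]; ring

set_option maxHeartbeats 1000000 in
/-- Eigenvalue bounds for weighted stiffness matrices: if
`K₀(r,s) = ∫_Ω ā ∇φ_s·∇φ_r` and `K(r,s) = ∫_Ω w ∇φ_s·∇φ_r` with
`w_min ≤ w ≤ w_max` a.e. on `Ω`, and `K₀` is positive definite, then every real
eigenvalue `μ` of `K₀⁻¹ K` (i.e. of `K z = μ K₀ z`) satisfies
`w_min/ā ≤ μ ≤ w_max/ā`. -/
theorem weighted_stiffness_eigenvalue_bounds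
    (d n : ℕ) (hn : 0 < n)
    (Ω : Set (EuclideanSpace ℝ (Fin d))) (hΩ : MeasurableSet Ω)
    (abar : ℝ) (habar : 0 < abar)
    (w : EuclideanSpace ℝ (Fin d) → ℝ) (hw : Measurable w)
    (wmin wmax : ℝ)
    (hwbound : ∀ᵐ x ∂(volume.restrict Ω), wmin ≤ w x ∧ w x ≤ wmax)
    (φ : Fin n → EuclideanSpace ℝ (Fin d) → ℝ)
    (hφ : ∀ s, Differentiable ℝ (φ s))
    (hgrad : ∀ s, MemLp (fun x => gradient (φ s) x) 2 (volume.restrict Ω))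
    (K₀ : Matrix (Fin n) (Fin n) ℝ)
    (hK₀ : ∀ r s, K₀ r s =
      ∫ x in Ω, abar * (inner ℝ (gradient (φ s) x) (gradient (φ r) x) : ℝ))
    (K : Matrix (Fin n) (Fin n) ℝ)
    (hK : ∀ r s, K r s =
      ∫ x in Ω, w x * (inner ℝ (gradient (φ s) x) (gradient (φ r) x) : ℝ))
    (hK₀pd : K₀.PosDef)
    (μ : ℝ) (z : Fin n → ℝ) (hz : z ≠ 0)
    (heig : K *ᵥ z = μ • (K₀ *ᵥ z)) :
    wmin / abar ≤ μ ∧ μ ≤ wmax / abar := by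
  set ν := volume.restrict Ω with hν
  set a : Fin n → EuclideanSpace ℝ (Fin d) → EuclideanSpace ℝ (Fin d) :=
    fun s x => gradient (φ s) x with ha
  set g : EuclideanSpace ℝ (Fin d) → EuclideanSpace ℝ (Fin d) :=
    fun x => ∑ s, z s • a s x with hg
  -- integrability facts
  have hC : ∀ᵐ x ∂ν, ‖w x‖ ≤ max |wmin| |wmax| := by
    filter_upwards [hwbound] with x ⟨h1, h2⟩
    rw [Real.norm_eq_abs, abs_le]
    constructor
    · calc -(max |wmin| |wmax|) ≤ -|wmin| := by simp [neg_le_neg, le_max_left]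
        _ ≤ wmin := neg_abs_le wmin
        _ ≤ w x := h1
    · exact h2.trans ((le_abs_self wmax).trans (le_max_right _ _))
  have hci : ∀ r s : Fin n, Integrable (fun x => w x * (inner ℝ (a s x) (a r x) : ℝ)) ν :=
    fun r s => (integrable_inner_of_memL2 (hgrad s) (hgrad r)).bdd_mul
      (hw.aestronglyMeasurable) hC
  have hci0 : ∀ r s : Fin n, Integrable
      (fun x => abar * (inner ℝ (a s x) (a r x) : ℝ)) ν :=
    fun r s => (integrable_inner_of_memL2 (hgrad s) (hgrad r)).const_mul abar
  have hg2 : MemLp g 2 ν := memLp_finset_sum _ (fun s _ => ((hgrad s).const_smul (z s)))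
  have hIg : Integrable (fun x => (inner ℝ (g x) (g x) : ℝ)) ν :=
    integrable_inner_of_memL2 hg2 hg2
  -- quadratic forms
  have hdot : ∀ M : Matrix (Fin n) (Fin n) ℝ,
      z ⬝ᵥ (M *ᵥ z) = ∑ r, z r * ∑ s, M r s * z s := by
    intro M; simp [dotProduct, mulVec]
  have hQ0 : z ⬝ᵥ (K₀ *ᵥ z) = ∫ x, abar * (inner ℝ (g x) (g x) : ℝ) ∂ν := by
    rw [hdot]; simp_rw [hK₀]
    exact quad_form_integral a (fun _ => abar) z hci0
  have hQ : z ⬝ᵥ (K *ᵥ z) = ∫ x, w x * (inner ℝ (g x) (g x) : ℝ) ∂ν := by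
    rw [hdot]; simp_rw [hK]
    exact quad_form_integral a w z hci
  -- positivity and eigenvalue relation
  have hpos : 0 < z ⬝ᵥ (K₀ *ᵥ z) := by simpa using hK₀pd.dotProduct_mulVec_pos hz
  have hheig : z ⬝ᵥ (K *ᵥ z) = μ * (z ⬝ᵥ (K₀ *ᵥ z)) := by
    rw [heig, dotProduct_smul, smul_eq_mul]
  set I := ∫ x, (inner ℝ (g x) (g x) : ℝ) ∂ν with hI
  have hQ0' : z ⬝ᵥ (K₀ *ᵥ z) = abar * I := by rw [hQ0, integral_const_mul]
  have hIpos : 0 < I := by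
    rw [hQ0'] at hpos; nlinarith
  have hIgw : Integrable (fun x => w x * (inner ℝ (g x) (g x) : ℝ)) ν :=
    hIg.bdd_mul hw.aestronglyMeasurable hC
  have hlow : wmin * I ≤ ∫ x, w x * (inner ℝ (g x) (g x) : ℝ) ∂ν := by
    rw [← integral_const_mul]
    refine integral_mono_ae (hIg.const_mul wmin) hIgw ?_
    filter_upwards [hwbound] with x hx
    exact mul_le_mul_of_nonneg_right hx.1 real_inner_self_nonneg
  have hhigh : (∫ x, w x * (inner ℝ (g x) (g x) : ℝ) ∂ν) ≤ wmax * I := by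
    rw [← integral_const_mul]
    refine integral_mono_ae hIgw (hIg.const_mul wmax) ?_
    filter_upwards [hwbound] with x hx
    exact mul_le_mul_of_nonneg_right hx.2 real_inner_self_nonneg
  have hmain : μ * (abar * I) = ∫ x, w x * (inner ℝ (g x) (g x) : ℝ) ∂ν := by
    rw [← hQ, hheig, hQ0']
  constructor
  · rw [div_le_iff₀ habar]
    nlinarith [hlow, hmain, hIpos]
  · rw [le_div_iff₀ habar]
    nlinarith [hhigh, hmain, hIpos]
end
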